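/- Let H be a real inner product space, V a subspace of H, and let x, y, z ∈ H and ω ≥ 0 be such that ⟨x, w⟩ = 0 for every w ∈ V, z ∈ V, and ‖y − z‖ ≤ ω. Then |⟨x, y⟩| ≤ ‖x‖·ω; consequently, for every δ > 0 one has (1 − δ)‖x‖² ≤ ‖x + y‖² − ‖y‖² + ω²/δ, and in the particular case ω = 0 one has the exact orthogonality identity ‖x + y‖² = ‖x‖² + ‖y‖². -/

import Mathlib

/-- Quasi-orthogonality (Theorem 3.2) in abstract inner-product-space form. -/
theorem quasi_orthogonality
    {H : Type*} [NormedAddCommGroup H] [InnerProductSpace ℝ H]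
    (V : Submodule ℝ H) (x y z : H) (ω : ℝ) (hω : 0 ≤ ω)
    (hx : ∀ w ∈ V, inner ℝ x w = (0 : ℝ))
    (hz : z ∈ V) (hyz : ‖y - z‖ ≤ ω) :
    |inner ℝ x y| ≤ ‖x‖ * ω ∧
    (∀ δ : ℝ, 0 < δ →
      (1 - δ) * ‖x‖ ^ 2 ≤ ‖x + y‖ ^ 2 - ‖y‖ ^ 2 + ω ^ 2 / δ) ∧
    (ω = 0 → ‖x + y‖ ^ 2 = ‖x‖ ^ 2 + ‖y‖ ^ 2) := by
  have hxy : (inner ℝ x y : ℝ) = inner ℝ x (y - z) := by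
    rw [inner_sub_right, hx z hz]; ring
  have h1 : |(inner ℝ x y : ℝ)| ≤ ‖x‖ * ω := by
    rw [hxy]
    calc |(inner ℝ x (y - z) : ℝ)| ≤ ‖x‖ * ‖y - z‖ := abs_real_inner_le_norm x (y - z)
      _ ≤ ‖x‖ * ω := by
        exact mul_le_mul_of_nonneg_left hyz (norm_nonneg x)
  have hexp : ‖x + y‖ ^ 2 = ‖x‖ ^ 2 + 2 * inner ℝ x y + ‖y‖ ^ 2 := by
    rw [← real_inner_self_eq_norm_sq, ← real_inner_self_eq_norm_sq,
      ← real_inner_self_eq_norm_sq, inner_add_add_self, real_inner_comm y x]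
    ring
  refine ⟨h1, fun δ hδ => ?_, fun h0 => ?_⟩
  · have h2 : -(2 * inner ℝ x y) ≤ 2 * (‖x‖ * ω) := by
      have := neg_abs_le (inner ℝ x y : ℝ); nlinarith
    have hyoung : 2 * (‖x‖ * ω) ≤ δ * ‖x‖ ^ 2 + ω ^ 2 / δ := by
      have := sq_nonneg (δ * ‖x‖ - ω)
      rw [← sub_nonneg]
      have : δ * ‖x‖ ^ 2 + ω ^ 2 / δ - 2 * (‖x‖ * ω) = (δ * ‖x‖ - ω)^2 / δ := by
        field_simp; ring
      rw [this]
      positivity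
    nlinarith
  · have : (inner ℝ x y : ℝ) = 0 := by
      have h1' := h1
      rw [h0, mul_zero] at h1'
      exact abs_nonpos_iff.mp h1'
    linarith [hexp, this]
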